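/- Let F : 2^V → ℝ be monotone (F(A) ≤ F(B) whenever A ⊆ B) and submodular (F(A) + F(B) ≥ F(A∪B) + F(A∩B) for all A, B ⊆ V) with F(∅) = 0 and F(A) > 0 for nonempty A, and define Θ_∞(w) = inf{ Σ_{S⊆V} α_S F(S) : α_S ≥ 0, Σ_{S⊆V} α_S = 1, Σ_{S : i∈S} α_S ≥ |w_i| ∀i } (with inf ∅ = ∞). If J ⊆ V is weakly stable with respect to Θ_∞, in the sense that there exists w ∈ ℝ^V with supp(w) = J and ‖w‖_∞ ≤ 1 such that Θ_∞ is decomposable at w with respect to J, then J is weakly stable with respect to F: F(J ∪ {i}) > F(J) for every i ∉ J. -/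

import Mathlib

open scoped BigOperators ENNReal

/-- The non-homogeneous `ℓ∞`-relaxation `Θ_∞` with values in `[0,∞]` (`sInf ∅ = ∞`). -/
noncomputable def thetaInfE {V : Type*} [Fintype V] [DecidableEq V]
    (F : Finset V → ℝ) (w : V → ℝ) : ℝ≥0∞ :=
  sInf { t : ℝ≥0∞ | ∃ α : Finset V → ℝ,
    (∀ S, 0 ≤ α S) ∧ (∑ S : Finset V, α S) = 1 ∧
    (∀ i : V, |w i| ≤ ∑ S : Finset V, if i ∈ S then α S else 0) ∧
    t = ENNReal.ofReal (∑ S : Finset V, α S * F S) }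


section AuxStmt14
variable {V : Type*} [DecidableEq V]

lemma stmt14_prefix_insert (L : List V) {n : ℕ} (hn : n < L.length) (j₀ : V) :
    (L.take (n+1)).toFinset = insert (L.getD n j₀) ((L.take n).toFinset) := by
  rw [List.getD_eq_getElem _ _ hn, ← List.take_concat_get hn,
    List.concat_eq_append, List.toFinset_append]
  ext x
  simp

lemma stmt14_mem_prefix_iff (L : List V) (hnd : L.Nodup) (j₀ : V) {p m : ℕ}
    (hp : p < L.length) : L.getD p j₀ ∈ (L.take m).toFinset ↔ p < m := by
  constructor
  · intro h
    by_contra hpm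
    push_neg at hpm
    rw [List.mem_toFinset, List.mem_iff_getElem] at h
    obtain ⟨q, hq, hq2⟩ := h
    simp only [List.length_take, lt_min_iff] at hq
    rw [List.getElem_take] at hq2
    rw [List.getD_eq_getElem _ _ hp] at hq2
    have hinj := List.nodup_iff_injective_get.mp hnd
    have : (⟨q, hq.2⟩ : Fin L.length) = ⟨p, hp⟩ :=
      hinj (by simpa [List.get_eq_getElem] using hq2)
    simp at this
    omega
  · intro h
    rw [List.getD_eq_getElem _ _ hp, List.mem_toFinset]
    have hlt : p < (L.take m).length := by simp; omega
    have : (L.take m)[p]'hlt = L[p] := List.getElem_take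
    exact this ▸ List.getElem_mem _

lemma stmt14_not_mem_prefix (L : List V) (hnd : L.Nodup) {n : ℕ} (hn : n < L.length) (j₀ : V) :
    L.getD n j₀ ∉ (L.take n).toFinset := by
  rw [stmt14_mem_prefix_iff L hnd j₀ hn]; omega

lemma stmt14_greedy_bound (F : Finset V → ℝ) (hF0 : F ∅ = 0)
    (hmono : ∀ A B : Finset V, A ⊆ B → F A ≤ F B)
    (hsub : ∀ A B : Finset V, F (A ∪ B) + F (A ∩ B) ≤ F A + F B)
    (L : List V) (hnd : L.Nodup) (j₀ : V) (A : Finset V) :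
    ∑ n ∈ Finset.range L.length,
      (if L.getD n j₀ ∈ A then F ((L.take (n+1)).toFinset) - F ((L.take n).toFinset) else 0)
      ≤ F A := by
  have key : ∀ m, m ≤ L.length →
      ∑ n ∈ Finset.range m, (if L.getD n j₀ ∈ A then
          F ((L.take (n+1)).toFinset) - F ((L.take n).toFinset) else 0)
        ≤ F (A ∩ (L.take m).toFinset) := by
    intro m
    induction m with
    | zero => intro _; simp [hF0]
    | succ m ih =>
      intro hm
      have hmlen : m < L.length := hm
      have ihm := ih (le_of_lt hmlen)
      rw [Finset.sum_range_succ]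
      set x := L.getD m j₀ with hx
      have hins := stmt14_prefix_insert L hmlen j₀
      have hxnot := stmt14_not_mem_prefix L hnd hmlen j₀
      set S := (L.take m).toFinset with hS
      by_cases hxA : x ∈ A
      · rw [if_pos hxA, hins]
        have hsub2 := hsub (insert x (A ∩ S)) S
        have h1 : insert x (A ∩ S) ∪ S = insert x S := by
          rw [Finset.insert_union]
          congr 1
          exact Finset.union_eq_right.mpr Finset.inter_subset_right
        have h2 : insert x (A ∩ S) ∩ S = A ∩ S := by
          rw [Finset.insert_inter_of_notMem hxnot, Finset.inter_assoc, Finset.inter_self]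
        have h3 : A ∩ insert x S = insert x (A ∩ S) := by
          rw [Finset.inter_comm, Finset.insert_inter_of_mem hxA, Finset.inter_comm]
        rw [h1, h2] at hsub2
        rw [h3]
        linarith
      · rw [if_neg hxA, hins]
        have h3 : A ∩ insert x S = A ∩ S := by
          rw [Finset.inter_comm, Finset.insert_inter_of_notMem hxA, Finset.inter_comm]
        rw [h3]
        linarith
  have := key L.length le_rfl
  rw [List.take_length] at this
  exact this.trans (hmono _ _ Finset.inter_subset_left)

lemma stmt14_sum_ite_mem [Fintype V] (j : V) (c : Finset V) (a : ℝ) :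
    ∑ T : Finset V, (if j ∈ T then (if T = c then a else 0) else 0)
      = if j ∈ c then a else 0 := by
  have h : ∀ T : Finset V, (if j ∈ T then (if T = c then a else 0) else 0)
      = (if T = c then (if j ∈ c then a else 0) else 0) := by
    intro T
    split_ifs with h1 h2 <;> simp_all
  rw [Finset.sum_congr rfl (fun T _ => h T)]
  simp

end AuxStmt14

theorem stmt_14 {V : Type*} [Fintype V] [DecidableEq V]
    (F : Finset V → ℝ) (hF0 : F ∅ = 0) (hFpos : ∀ A : Finset V, A.Nonempty → 0 < F A)
    (hmono : ∀ A B : Finset V, A ⊆ B → F A ≤ F B)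
    (hsub : ∀ A B : Finset V, F (A ∪ B) + F (A ∩ B) ≤ F A + F B)
    (J : Finset V)
    (hws : ∃ w : V → ℝ, (∀ i, w i ≠ 0 ↔ i ∈ J) ∧ (∀ i, |w i| ≤ 1) ∧
      ∃ M : ℝ, 0 < M ∧ ∀ Δ : V → ℝ, (∀ i ∈ J, Δ i = 0) →
        thetaInfE F w + ENNReal.ofReal (M * (⨆ i, |Δ i|)) ≤ thetaInfE F (w + Δ)) :
    ∀ i ∉ J, F J < F (insert i J) := by
  intro i hi
  by_contra hlt
  push_neg at hlt
  have hEq : F (insert i J) = F J :=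
    le_antisymm hlt (hmono _ _ (Finset.subset_insert _ _))
  obtain ⟨w, hsupp, hbnd, M, hM, hdec⟩ := hws
  rcases J.eq_empty_or_nonempty with hJe | hJne
  · subst hJe
    have hpos := hFpos (insert i ∅) ⟨i, Finset.mem_insert_self i ∅⟩
    rw [hEq, hF0] at hpos
    exact lt_irrefl 0 hpos
  obtain ⟨j₀, hj₀⟩ := hJne
  have : Nonempty V := ⟨i⟩
  -- the sorted list
  set L : List V := J.toList.mergeSort (fun a b => decide (|w b| ≤ |w a|)) with hLdef
  have hperm : L.Perm J.toList := List.mergeSort_perm _ _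
  have hnd : L.Nodup := hperm.nodup_iff.mpr J.nodup_toList
  have hLJ : L.toFinset = J := by
    rw [List.toFinset_eq_of_perm _ _ hperm, Finset.toList_toFinset]
  have hsort : L.Pairwise (fun a b => decide (|w b| ≤ |w a|) = true) := by
    apply List.pairwise_mergeSort
    · intro a b c h1 h2
      simp only [decide_eq_true_eq] at *
      exact le_trans h2 h1
    · intro a b
      simp only [Bool.or_eq_true, decide_eq_true_eq]
      exact le_total _ _
  set k : ℕ := L.length with hkdef
  have hk0 : 0 < k := by
    have : j₀ ∈ L.toFinset := hLJ ▸ hj₀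
    rw [List.mem_toFinset] at this
    exact List.length_pos_iff.mpr (List.ne_nil_of_mem this)
  set e : ℕ → V := fun n => L.getD n j₀ with hedef
  have he : ∀ n, n < k → e n ∈ J := by
    intro n hn
    rw [← hLJ, List.mem_toFinset, hedef]
    show L.getD n j₀ ∈ L
    rw [List.getD_eq_getElem _ _ hn]
    exact List.getElem_mem _
  set t : ℝ := |w (e (k-1))| with htdef
  have ht : 0 < t := by
    rw [htdef]
    exact abs_pos.mpr ((hsupp _).mpr (he _ (by omega)))
  have ht1 : t ≤ 1 := hbnd _
  set v : ℕ → ℝ := fun n => if n < k then |w (e n)| else t with hvdef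
  have hvk : ∀ n, k ≤ n → v n = t := by intro n hn; simp [hvdef, Nat.not_lt.mpr hn]
  have hv_nonneg : ∀ n, 0 ≤ v n := by
    intro n; rw [hvdef]; dsimp only; split_ifs; exacts [abs_nonneg _, ht.le]
  have hv1 : ∀ n, v n ≤ 1 := by
    intro n; rw [hvdef]; dsimp only; split_ifs; exacts [hbnd _, ht1]
  have hv_anti : ∀ n, v (n+1) ≤ v n := by
    intro n
    rcases lt_or_ge (n+1) k with h1 | h1
    · have hp := List.pairwise_iff_getElem.mp hsort n (n+1) (by omega) h1 (by omega)
      simp only [decide_eq_true_eq] at hp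
      have e1 : v (n+1) = |w (L[n+1])| := by
        simp [hvdef, h1, hedef, List.getD_eq_getElem _ _ h1, List.getElem?_eq_getElem h1]
      have e2 : v n = |w (L[n]'(by omega))| := by
        have hn : n < k := by omega
        simp [hvdef, hn, hedef, List.getD_eq_getElem _ _ hn, List.getElem?_eq_getElem hn]
      rw [e1, e2]; exact hp
    · rcases lt_or_ge n k with h2 | h2
      · have hnk : n = k - 1 := by omega
        rw [hvk _ h1, hvdef]
        simp only [h2, if_pos]
        rw [hnk]
      · rw [hvk _ h1, hvk _ (by omega)]
  have hvt : ∀ n, t ≤ v n := by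
    intro n
    rcases le_or_gt k n with h | h
    · rw [hvk _ h]
    · have : ∀ m, v (n + m) ≤ v n := by
        intro m; induction m with
        | zero => simp
        | succ m ih => exact le_trans (by rw [← Nat.add_assoc]; exact hv_anti (n+m)) ih
      have := this (k - n)
      rw [Nat.add_sub_cancel' h.le, hvk _ le_rfl] at this
      exact this
  set S : ℕ → Finset V := fun n => (L.take n).toFinset with hSdef
  have hS0 : S 0 = ∅ := by simp [hSdef]
  have hSk : S k = J := by simp [hSdef, hkdef, List.take_length, hLJ]
  have hSJ : ∀ n, S n ⊆ J := by
    intro n x hx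
    rw [hSdef, List.mem_toFinset] at hx
    rw [← hLJ, List.mem_toFinset]
    exact List.take_subset _ _ hx
  have hSins : ∀ n, n < k → S (n+1) = insert (e n) (S n) := by
    intro n hn; exact stmt14_prefix_insert L hn j₀
  have hSmono : ∀ n, n < k → F (S n) ≤ F (S (n+1)) := by
    intro n hn
    apply hmono
    rw [hSins n hn]
    exact Finset.subset_insert _ _
  set Lval : ℝ := ∑ n ∈ Finset.range k, v n * (F (S (n+1)) - F (S n)) with hLval
  -- lower bound
  have hlow : ENNReal.ofReal Lval ≤ thetaInfE F w := by
    apply le_sInf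
    rintro b ⟨α, hα0, hα1, hcov, rfl⟩
    apply ENNReal.ofReal_le_ofReal
    have step1 : ∀ T : Finset V, (∑ n ∈ Finset.range k,
        (if e n ∈ T then F (S (n+1)) - F (S n) else 0)) ≤ F T := by
      intro T
      exact stmt14_greedy_bound F hF0 hmono hsub L hnd j₀ T
    calc Lval = ∑ n ∈ Finset.range k, v n * (F (S (n+1)) - F (S n)) := hLval
      _ ≤ ∑ n ∈ Finset.range k,
            (∑ T : Finset V, if e n ∈ T then α T else 0) * (F (S (n+1)) - F (S n)) := by
          apply Finset.sum_le_sum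
          intro n hn
          rw [Finset.mem_range] at hn
          apply mul_le_mul_of_nonneg_right _ (by linarith [hSmono n hn])
          calc v n = |w (e n)| := by simp [hvdef, hn]
            _ ≤ _ := hcov (e n)
      _ = ∑ T : Finset V, α T * (∑ n ∈ Finset.range k,
            (if e n ∈ T then F (S (n+1)) - F (S n) else 0)) := by
          simp_rw [Finset.sum_mul, Finset.mul_sum]
          rw [Finset.sum_comm]
          refine Finset.sum_congr rfl fun T _ => Finset.sum_congr rfl fun n _ => ?_
          split_ifs <;> ring
      _ ≤ ∑ T : Finset V, α T * F T := by
          apply Finset.sum_le_sum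
          intro T _
          exact mul_le_mul_of_nonneg_left (step1 T) (hα0 T)
  -- the perturbation
  set Δ : V → ℝ := fun j => if j = i then t else 0 with hΔdef
  have hΔJ : ∀ j ∈ J, Δ j = 0 := by
    intro j hj
    rw [hΔdef]
    dsimp only
    rw [if_neg]
    rintro rfl
    exact hi hj
  have hsup : (⨆ j, |Δ j|) = t := by
    apply le_antisymm
    · apply ciSup_le
      intro j
      rw [hΔdef]
      dsimp only
      split_ifs
      · rw [abs_of_nonneg ht.le]
      · simpa using ht.le
    · have h2 := le_ciSup (f := fun j => |Δ j|) (Set.Finite.bddAbove (Set.finite_range _)) i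
      simpa [hΔdef, abs_of_nonneg ht.le] using h2
  -- the explicit certificate for w + Δ
  set α' : Finset V → ℝ := fun T =>
    (if T = (∅ : Finset V) then 1 - v 0 else 0) + (if T = insert i J then t else 0)
    + ∑ n ∈ Finset.range k, (if T = S (n+1) then v n - v (n+1) else 0) with hα'def
  have hcost : ∑ T : Finset V, α' T * F T = Lval := by
    rw [hα'def]
    dsimp only
    simp only [add_mul, Finset.sum_mul, ite_mul, zero_mul]
    rw [Finset.sum_add_distrib, Finset.sum_add_distrib]
    have e1 : ∑ T : Finset V, (if T = (∅:Finset V) then (1 - v 0) * F T else 0)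
        = (1 - v 0) * F ∅ := by simp
    have e2 : ∑ T : Finset V, (if T = insert i J then t * F T else 0)
        = t * F (insert i J) := by simp
    have e3 : ∑ T : Finset V, ∑ n ∈ Finset.range k,
        (if T = S (n+1) then (v n - v (n+1)) * F T else 0)
        = ∑ n ∈ Finset.range k, (v n - v (n+1)) * F (S (n+1)) := by
      rw [Finset.sum_comm]
      exact Finset.sum_congr rfl fun n _ => by simp
    rw [e1, e2, e3, hF0, hEq, mul_zero, zero_add]
    have habel : ∑ n ∈ Finset.range k, (v (n+1) * F (S (n+1)) - v n * F (S n))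
        = v k * F (S k) - v 0 * F (S 0) := Finset.sum_range_sub (fun n => v n * F (S n)) k
    rw [hS0, hSk, hF0, hvk k le_rfl, mul_zero, sub_zero] at habel
    have expand : ∑ n ∈ Finset.range k, v n * (F (S (n+1)) - F (S n))
        - ∑ n ∈ Finset.range k, (v n - v (n+1)) * F (S (n+1))
        = ∑ n ∈ Finset.range k, (v (n+1) * F (S (n+1)) - v n * F (S n)) := by
      rw [← Finset.sum_sub_distrib]
      exact Finset.sum_congr rfl fun n _ => by ring
    rw [hLval]
    linarith [expand, habel]
  have hup : thetaInfE F (w + Δ) ≤ ENNReal.ofReal Lval := by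
    apply sInf_le
    refine ⟨α', ?_, ?_, ?_, by rw [hcost]⟩
    · intro T
      rw [hα'def]
      dsimp only
      refine add_nonneg (add_nonneg ?_ ?_) (Finset.sum_nonneg fun n _ => ?_)
      · split_ifs <;> linarith [hv1 0]
      · split_ifs <;> linarith [ht]
      · split_ifs <;> linarith [hv_anti n]
    · rw [hα'def]
      dsimp only
      rw [Finset.sum_add_distrib, Finset.sum_add_distrib]
      have e1 : ∑ T : Finset V, (if T = (∅:Finset V) then 1 - v 0 else 0) = 1 - v 0 := by simp
      have e2 : ∑ T : Finset V, (if T = insert i J then t else 0) = t := by simp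
      have e3 : ∑ T : Finset V, ∑ n ∈ Finset.range k,
          (if T = S (n+1) then v n - v (n+1) else 0) = v 0 - v k := by
        rw [Finset.sum_comm]
        have h4 : ∀ n ∈ Finset.range k, ∑ T : Finset V,
            (if T = S (n+1) then v n - v (n+1) else 0) = v n - v (n+1) := by
          intro n _
          simp
        rw [Finset.sum_congr rfl h4, Finset.sum_range_sub' v k]
      rw [e1, e2, e3, hvk k le_rfl]
      ring
    · intro j
      have hcovj : (∑ T : Finset V, if j ∈ T then α' T else 0)
          = (if j ∈ (∅:Finset V) then 1 - v 0 else 0) + (if j ∈ insert i J then t else 0)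
            + ∑ n ∈ Finset.range k, (if j ∈ S (n+1) then v n - v (n+1) else 0) := by
        rw [hα'def]
        dsimp only
        have hsplit : ∀ T : Finset V, (if j ∈ T then
            ((if T = (∅ : Finset V) then 1 - v 0 else 0) + (if T = insert i J then t else 0)
              + ∑ n ∈ Finset.range k, (if T = S (n+1) then v n - v (n+1) else 0)) else 0)
            = (if j ∈ T then (if T = (∅:Finset V) then 1 - v 0 else 0) else 0)
              + (if j ∈ T then (if T = insert i J then t else 0) else 0)
              + ∑ n ∈ Finset.range k,
                  (if j ∈ T then (if T = S (n+1) then v n - v (n+1) else 0) else 0) := by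
          intro T
          split_ifs <;> simp
        rw [Finset.sum_congr rfl (fun T _ => hsplit T), Finset.sum_add_distrib,
          Finset.sum_add_distrib, stmt14_sum_ite_mem, stmt14_sum_ite_mem, Finset.sum_comm]
        congr 1
        exact Finset.sum_congr rfl fun n _ => stmt14_sum_ite_mem j _ _
      rw [hcovj]
      have hΔj : ∀ x, Δ x = if x = i then t else 0 := fun x => by rw [hΔdef]
      by_cases hji : j = i
      · subst hji
        have hwi : w j = 0 := by
          by_contra hc
          exact hi ((hsupp j).mp hc)
        have hiS : ∀ n ∈ Finset.range k, (if j ∈ S (n+1) then v n - v (n+1) else 0) = 0 := by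
          intro n _
          rw [if_neg]
          intro hmem
          exact hi (hSJ _ hmem)
        rw [Finset.sum_congr rfl hiS]
        simp [Pi.add_apply, hΔj, hwi, abs_of_nonneg ht.le]
      · by_cases hjJ : j ∈ J
        · have hjL : j ∈ L := by rw [← List.mem_toFinset, hLJ]; exact hjJ
          obtain ⟨p, hp, hpe⟩ := List.mem_iff_getElem.mp hjL
          have hpk : p < k := hp
          have hje : j = e p := by
            rw [hedef]
            dsimp only
            rw [List.getD_eq_getElem _ _ hp, hpe]
          have hmemiff : ∀ n, j ∈ S (n+1) ↔ p ≤ n := by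
            intro n
            rw [hje, hSdef]
            dsimp only
            rw [stmt14_mem_prefix_iff L hnd j₀ hp]
            omega
          have hsum : ∑ n ∈ Finset.range k, (if j ∈ S (n+1) then v n - v (n+1) else 0)
              = v p - v k := by
            have hterm : ∀ n ∈ Finset.range k, (if j ∈ S (n+1) then v n - v (n+1) else 0)
                = (if p ≤ n then v n - v (n+1) else 0) := by
              intro n _
              exact if_congr (hmemiff n) rfl rfl
            rw [Finset.sum_congr rfl hterm, ← Finset.sum_filter]
            have hfil : (Finset.range k).filter (fun n => p ≤ n) = Finset.Ico p k := by
              ext n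
              simp only [Finset.mem_filter, Finset.mem_range, Finset.mem_Ico]
              omega
            rw [hfil, Finset.sum_Ico_eq_sub _ hpk.le, Finset.sum_range_sub' v k,
              Finset.sum_range_sub' v p]
            ring
          rw [hsum, hvk k le_rfl]
          have hΔ0 : Δ j = 0 := hΔJ j hjJ
          have hvp : v p = |w j| := by
            rw [hje, hvdef]
            dsimp only
            rw [if_pos hpk]
          simp only [Pi.add_apply, hΔ0, add_zero, Finset.notMem_empty, if_neg, if_false]
          rw [if_pos (Finset.mem_insert_of_mem hjJ)]
          rw [← hvp]
          linarith
        · have hwj : w j = 0 := by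
            by_contra hc
            exact hjJ ((hsupp j).mp hc)
          have hΔ0 : Δ j = 0 := by rw [hΔj, if_neg hji]
          have hjS : ∀ n ∈ Finset.range k, (if j ∈ S (n+1) then v n - v (n+1) else 0) = 0 := by
            intro n _
            rw [if_neg]
            intro hmem
            exact hjJ (hSJ _ hmem)
          rw [Finset.sum_congr rfl hjS]
          have : j ∉ insert i J := by
            intro hmem
            rcases Finset.mem_insert.mp hmem with h | h
            · exact hji h
            · exact hjJ h
          simp [Pi.add_apply, hΔ0, hwj, this]
  -- conclude
  have h3 := hdec Δ hΔJ
  rw [hsup] at h3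
  have hchain : ENNReal.ofReal Lval + ENNReal.ofReal (M * t) ≤ ENNReal.ofReal Lval + 0 := by
    simpa using le_trans (add_le_add_left hlow _) (le_trans h3 hup)
  have h0 : ENNReal.ofReal (M * t) ≤ 0 :=
    (ENNReal.add_le_add_iff_left ENNReal.ofReal_ne_top).mp hchain
  have hMt : M * t ≤ 0 :=
    ENNReal.ofReal_eq_zero.mp (le_antisymm h0 zero_le)
  nlinarith [mul_pos hM ht]
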